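/- Let G be a locally compact Hausdorff abelian topological group with Haar measure μ, and let σ : G × G → Circle be a continuous 2-cocycle, i.e. σ(x,y)·σ(x+y,z) = σ(x,y+z)·σ(y,z) for all x,y,z ∈ G. For continuous compactly supported f, g : G → ℂ define the twisted convolution (f ∗_σ g)(ξ) = ∫_G σ(η, ξ−η)·f(η)·g(ξ−η) dμ(η). Then f ∗_σ g is again continuous with compact support, and the twisted convolution is associative: ((f ∗_σ g) ∗_σ h)(ξ) = (f ∗_σ (g ∗_σ h))(ξ) for all continuous compactly supported f, g, h : G → ℂ and all ξ ∈ G. -/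

import Mathlib

open MeasureTheory

/-- The twisted convolution of `f, g : G → ℂ` with respect to a Circle-valued cocycle `σ`,
with respect to the measure `μ`. -/
noncomputable def twistedConv {G : Type*} [AddCommGroup G] [MeasurableSpace G]
    (μ : Measure G) (σ : G → G → Circle) (f g : G → ℂ) : G → ℂ :=
  fun ξ => ∫ η, ((σ η (ξ - η) : ℂ) * f η * g (ξ - η)) ∂μ

section Aux

variable {G : Type*} [AddCommGroup G] [TopologicalSpace G] [IsTopologicalAddGroup G]
    [LocallyCompactSpace G] [T2Space G] [MeasurableSpace G] [BorelSpace G]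
    (μ : Measure G) [μ.IsAddHaarMeasure] (σ : G → G → Circle)

theorem twistedConv_aux_continuous
    (hσcont : Continuous fun p : G × G => σ p.1 p.2)
    (f g : G → ℂ) (hf : Continuous f) (hfc : HasCompactSupport f) (hg : Continuous g) :
    Continuous (twistedConv μ σ f g) := by
  have hcoe : Continuous ((↑) : Circle → ℂ) := continuous_induced_dom
  have hsc : Continuous fun p : G × G => (σ p.1 p.2 : ℂ) := hcoe.comp hσcont
  have hF : Continuous fun p : G × G => (σ p.2 (p.1 - p.2) : ℂ) * f p.2 * g (p.1 - p.2) := by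
    have c1 : Continuous fun p : G × G => (σ p.2 (p.1 - p.2) : ℂ) :=
      hsc.comp (continuous_snd.prodMk (continuous_fst.sub continuous_snd))
    exact (c1.mul (hf.comp continuous_snd)).mul (hg.comp (continuous_fst.sub continuous_snd))
  have key := continuousOn_integral_bilinear_of_locally_integrable_of_compact_support
    (μ := μ) (ContinuousLinearMap.mul ℂ ℂ)
    (f := fun ξ η => (σ η (ξ - η) : ℂ) * f η * g (ξ - η))
    (s := Set.univ) (k := tsupport f) (g := fun _ => (1 : ℂ))
    hfc (hF.continuousOn) (fun p x _ hx => by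
      simp [image_eq_zero_of_notMem_tsupport hx])
    (integrableOn_const hfc.measure_lt_top.ne)
  rw [← continuousOn_univ]
  have : (fun x => ∫ y, (ContinuousLinearMap.mul ℂ ℂ) ((fun _ => (1 : ℂ)) y)
      ((fun ξ η => (σ η (ξ - η) : ℂ) * f η * g (ξ - η)) x y) ∂μ) = twistedConv μ σ f g := by
    funext x
    simp [twistedConv]
  rwa [this] at key

theorem twistedConv_aux_compactSupport
    (f g : G → ℂ) (hfc : HasCompactSupport f) (hgc : HasCompactSupport g) :
    HasCompactSupport (twistedConv μ σ f g) := by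
  apply HasCompactSupport.intro (IsCompact.add hfc hgc)
  intro ξ hξ
  have hz : ∀ η, (σ η (ξ - η) : ℂ) * f η * g (ξ - η) = 0 := by
    intro η
    by_cases hfη : f η = 0
    · rw [hfη, mul_zero, zero_mul]
    by_cases hgη : g (ξ - η) = 0
    · rw [hgη, mul_zero]
    exfalso
    apply hξ
    have h1 : η ∈ tsupport f := subset_tsupport f hfη
    have h2 : ξ - η ∈ tsupport g := subset_tsupport g hgη
    have := Set.add_mem_add h1 h2
    rwa [add_sub_cancel] at this
  simp only [twistedConv]
  rw [show (fun η => (σ η (ξ - η) : ℂ) * f η * g (ξ - η)) = fun _ => (0 : ℂ) from funext hz]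
  simp

theorem twistedConv_aux_assoc
    (hσcont : Continuous fun p : G × G => σ p.1 p.2)
    (hcocycle : ∀ x y z : G, σ x y * σ (x + y) z = σ x (y + z) * σ y z)
    (f g h : G → ℂ) (hf : Continuous f) (hfc : HasCompactSupport f)
    (hg : Continuous g) (hgc : HasCompactSupport g)
    (hh : Continuous h) (hhc : HasCompactSupport h) (ξ : G) :
    twistedConv μ σ (twistedConv μ σ f g) h ξ
      = twistedConv μ σ f (twistedConv μ σ g h) ξ := by
  have hcoe : Continuous ((↑) : Circle → ℂ) := continuous_induced_dom
  have hsc : Continuous fun p : G × G => (σ p.1 p.2 : ℂ) := hcoe.comp hσcont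
  have hcoc' : ∀ x y z : G, (σ x y : ℂ) * σ (x + y) z = (σ x (y + z) : ℂ) * σ y z := by
    intro x y z
    have := congrArg (fun c : Circle => (c : ℂ)) (hcocycle x y z)
    simpa using this
  -- The double integrand
  set F2 : G → G → ℂ := fun η τ =>
    (σ η (ξ - η) : ℂ) * ((σ τ (η - τ) : ℂ) * f τ * g (η - τ)) * h (ξ - η) with hF2
  -- Continuity of the uncurried integrand
  have hcont : Continuous (Function.uncurry F2) := by
    have c1 : Continuous fun p : G × G => (σ p.1 (ξ - p.1) : ℂ) :=
      hsc.comp (continuous_fst.prodMk (continuous_const.sub continuous_fst))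
    have c2 : Continuous fun p : G × G => (σ p.2 (p.1 - p.2) : ℂ) :=
      hsc.comp (continuous_snd.prodMk (continuous_fst.sub continuous_snd))
    exact (c1.mul ((c2.mul (hf.comp continuous_snd)).mul
      (hg.comp (continuous_fst.sub continuous_snd)))).mul
      (hh.comp (continuous_const.sub continuous_fst))
  -- Compact support of the uncurried integrand
  have hsupp : HasCompactSupport (Function.uncurry F2) := by
    apply HasCompactSupport.intro ((IsCompact.add hgc hfc).prod hfc)
    intro p hp
    rw [Set.mem_prod, not_and_or] at hp
    rcases hp with hp1 | hp2
    · by_cases hfz : f p.2 = 0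
      · simp [Function.uncurry, hF2, hfz]
      · have hgz : g (p.1 - p.2) = 0 := by
          by_contra hgz
          apply hp1
          have h1 : p.1 - p.2 ∈ tsupport g := subset_tsupport g hgz
          have h2 : p.2 ∈ tsupport f := subset_tsupport f hfz
          have := Set.add_mem_add h1 h2
          rwa [sub_add_cancel] at this
        simp [Function.uncurry, hF2, hgz]
    · have hfz : f p.2 = 0 := image_eq_zero_of_notMem_tsupport hp2
      simp [Function.uncurry, hF2, hfz]
  calc twistedConv μ σ (twistedConv μ σ f g) h ξ
      = ∫ η, ∫ τ, F2 η τ ∂μ ∂μ := by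
        simp only [twistedConv]
        congr 1
        funext η
        rw [← integral_const_mul, ← integral_mul_const]
    _ = ∫ τ, ∫ η, F2 η τ ∂μ ∂μ :=
        integral_integral_swap_of_hasCompactSupport hcont hsupp
    _ = ∫ τ, ((σ τ (ξ - τ) : ℂ) * f τ) *
          ∫ η, (σ η (ξ - τ - η) : ℂ) * g η * h (ξ - τ - η) ∂μ ∂μ := by
        congr 1
        funext τ
        rw [← integral_add_right_eq_self (fun η => F2 η τ) τ, ← integral_const_mul]
        congr 1
        funext η
        simp only [hF2]
        rw [add_sub_cancel_right, show ξ - (η + τ) = ξ - τ - η by abel]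
        have hc := hcoc' τ η (ξ - τ - η)
        rw [show η + (ξ - τ - η) = ξ - τ by abel, add_comm τ η] at hc
        linear_combination (f τ * g η * h (ξ - τ - η)) * hc
    _ = twistedConv μ σ f (twistedConv μ σ g h) ξ := by
        simp only [twistedConv]

end Aux

/-- Twisted convolution (w.r.t. a continuous 2-cocycle and Haar measure on a locally compact
Hausdorff abelian group) of continuous compactly supported functions is continuous with
compact support, and is associative. -/
theorem twistedConv_continuous_hasCompactSupport_and_assoc
    {G : Type*} [AddCommGroup G] [TopologicalSpace G] [IsTopologicalAddGroup G]
    [LocallyCompactSpace G] [T2Space G] [MeasurableSpace G] [BorelSpace G]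
    (μ : Measure G) [μ.IsAddHaarMeasure]
    (σ : G → G → Circle)
    (hσcont : Continuous fun p : G × G => σ p.1 p.2)
    (hcocycle : ∀ x y z : G, σ x y * σ (x + y) z = σ x (y + z) * σ y z) :
    (∀ f g : G → ℂ, Continuous f → HasCompactSupport f →
      Continuous g → HasCompactSupport g →
      Continuous (twistedConv μ σ f g) ∧ HasCompactSupport (twistedConv μ σ f g)) ∧
    (∀ f g h : G → ℂ, Continuous f → HasCompactSupport f →
      Continuous g → HasCompactSupport g → Continuous h → HasCompactSupport h →
      ∀ ξ : G, twistedConv μ σ (twistedConv μ σ f g) h ξ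
        = twistedConv μ σ f (twistedConv μ σ g h) ξ) := by
  constructor
  · intro f g hf hfc hg hgc
    exact ⟨twistedConv_aux_continuous μ σ hσcont f g hf hfc hg,
      twistedConv_aux_compactSupport μ σ f g hfc hgc⟩
  · intro f g h hf hfc hg hgc hh hhc ξ
    exact twistedConv_aux_assoc μ σ hσcont hcocycle f g h hf hfc hg hgc hh hhc ξ
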